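/- Let {f_i}_{i∈I} be a Parseval frame for a Hilbert space H. Then for every subset J ⊆ I and every f ∈ H: ∑_{i∈J} |⟨f, f_i⟩|² + ‖∑_{i∈J^c} ⟨f, f_i⟩ f_i‖² ≥ (3/4)‖f‖², where J^c = I \ J. -/

import Mathlib

open scoped InnerProductSpace

/-- For a Parseval frame `{f_i}`, any `J ⊆ I` and any `x`:
`∑_{i∈J} |⟨x,f_i⟩|² + ‖∑_{i∈J^c} ⟨x,f_i⟩ f_i‖² ≥ (3/4)‖x‖²`. -/
theorem stmt_9 {H : Type*} [NormedAddCommGroup H] [InnerProductSpace ℂ H] [CompleteSpace H]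
    {ι : Type*} (f : ι → H)
    (hP : ∀ x : H, HasSum (fun i => ‖⟪f i, x⟫_ℂ‖ ^ 2) (‖x‖ ^ 2))
    (J : Set ι) (x : H) :
    (3 / 4 : ℝ) * ‖x‖ ^ 2 ≤
      (∑' i : J, ‖⟪f i, x⟫_ℂ‖ ^ 2) + ‖∑' i : ↥Jᶜ, ⟪f i, x⟫_ℂ • (f i : H)‖ ^ 2 := by
  set c : ι → ℂ := fun i => ⟪f i, x⟫_ℂ with hc
  have hsum : Summable (fun i => ‖c i‖ ^ 2) := (hP x).summable
  -- Bessel-type bound for finite sums of the frame expansion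
  have key : ∀ (F : Finset ↥Jᶜ),
      ‖∑ i ∈ F, c i • f i‖ ^ 2 ≤ ∑ i ∈ F, ‖c (i : ι)‖ ^ 2 := by
    intro F
    set S : H := ∑ i ∈ F, c i • f i with hS
    have hA : (0 : ℝ) ≤ ∑ i ∈ F, ‖c (i : ι)‖ ^ 2 :=
      Finset.sum_nonneg fun i _ => sq_nonneg _
    -- inner products with S
    have hpar : ∑ i ∈ F, ‖⟪f (i : ι), S⟫_ℂ‖ ^ 2 ≤ ‖S‖ ^ 2 := by
      have := Summable.sum_le_tsum (f := fun i => ‖⟪f i, S⟫_ℂ‖ ^ 2)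
        (F.map ⟨Subtype.val, Subtype.val_injective⟩)
        (fun i _ => sq_nonneg _) (hP S).summable
      rw [(hP S).tsum_eq] at this
      simpa [Finset.sum_map] using this
    have h1 : ‖S‖ ^ 2 ≤ ∑ i ∈ F, ‖c (i : ι)‖ * ‖⟪f (i : ι), S⟫_ℂ‖ := by
      have hSS : (‖S‖ : ℝ) ^ 2 = ‖⟪S, S⟫_ℂ‖ := by
        rw [inner_self_eq_norm_sq_to_K (𝕜 := ℂ)]
        simp
      rw [hSS, hS, sum_inner]
      refine (norm_sum_le _ _).trans (le_of_eq ?_)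
      refine Finset.sum_congr rfl fun i _ => ?_
      rw [inner_smul_left, norm_mul]
      rw [Complex.norm_conj]
    have h2 : ∑ i ∈ F, ‖c (i : ι)‖ * ‖⟪f (i : ι), S⟫_ℂ‖ ≤
        Real.sqrt (∑ i ∈ F, ‖c (i : ι)‖ ^ 2) * Real.sqrt (∑ i ∈ F, ‖⟪f (i : ι), S⟫_ℂ‖ ^ 2) :=
      Real.sum_mul_le_sqrt_mul_sqrt _ _ _
    have h3 : Real.sqrt (∑ i ∈ F, ‖⟪f (i : ι), S⟫_ℂ‖ ^ 2) ≤ ‖S‖ := by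
      rw [show (‖S‖ : ℝ) = Real.sqrt (‖S‖ ^ 2) by rw [Real.sqrt_sq (norm_nonneg _)]]
      exact Real.sqrt_le_sqrt hpar
    have h4 : ‖S‖ ^ 2 ≤ Real.sqrt (∑ i ∈ F, ‖c (i : ι)‖ ^ 2) * ‖S‖ := by
      calc ‖S‖ ^ 2 ≤ _ := h1
        _ ≤ _ := h2
        _ ≤ _ := by
          exact mul_le_mul_of_nonneg_left h3 (Real.sqrt_nonneg _)
    nlinarith [Real.sq_sqrt hA, Real.sqrt_nonneg (∑ i ∈ F, ‖c (i : ι)‖ ^ 2),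
      norm_nonneg S, sq_nonneg (‖S‖ - Real.sqrt (∑ i ∈ F, ‖c (i : ι)‖ ^ 2))]
  -- summability of the frame expansion over Jᶜ
  have hsumc : Summable (fun i : ↥Jᶜ => ‖c (i : ι)‖ ^ 2) := hsum.subtype Jᶜ
  have hB : Summable (fun i : ↥Jᶜ => c i • f i) := by
    rw [summable_iff_vanishing]
    intro e he
    obtain ⟨ε, hε, hball⟩ := Metric.mem_nhds_iff.mp he
    obtain ⟨s, hs⟩ := summable_iff_vanishing.mp hsumc (Metric.ball 0 (ε ^ 2))
      (Metric.ball_mem_nhds 0 (by positivity))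
    refine ⟨s, fun t ht => hball ?_⟩
    have h2 := hs t ht
    simp only [Metric.mem_ball, dist_zero_right, Real.norm_eq_abs] at h2 ⊢
    have hnn : (0 : ℝ) ≤ ∑ i ∈ t, ‖c (i : ι)‖ ^ 2 :=
      Finset.sum_nonneg fun i _ => sq_nonneg _
    rw [abs_of_nonneg hnn] at h2
    have h1 := key t
    nlinarith [norm_nonneg (∑ i ∈ t, c i • f i)]
  obtain ⟨y, hy⟩ := hB
  set a : ℝ := ∑' i : ↥Jᶜ, ‖c (i : ι)‖ ^ 2 with hadef
  set b : ℝ := ∑' i : J, ‖c (i : ι)‖ ^ 2 with hbdef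
  have ha0 : (0 : ℝ) ≤ a := tsum_nonneg fun i => sq_nonneg _
  have hb0 : (0 : ℝ) ≤ b := tsum_nonneg fun i => sq_nonneg _
  have hab : b + a = ‖x‖ ^ 2 := by
    rw [hadef, hbdef, hsum.tsum_subtype_add_tsum_subtype_compl J, (hP x).tsum_eq]
  -- ⟪x, y⟫ = a
  have hxy : ⟪x, y⟫_ℂ = (a : ℂ) := by
    have h1 : HasSum (fun i : ↥Jᶜ => ⟪x, c i • f i⟫_ℂ) ⟪x, y⟫_ℂ := hy.mapL (innerSL ℂ x)
    have h2 : HasSum (fun i : ↥Jᶜ => ((‖c (i : ι)‖ ^ 2 : ℝ) : ℂ)) ((a : ℝ) : ℂ) := by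
      exact hsumc.hasSum.mapL Complex.ofRealCLM
    have heq : (fun i : ↥Jᶜ => ⟪x, c i • f i⟫_ℂ) = fun i : ↥Jᶜ => ((‖c (i : ι)‖ ^ 2 : ℝ) : ℂ) := by
      funext i
      rw [inner_smul_right]
      have : ⟪x, f (i : ι)⟫_ℂ = (starRingEnd ℂ) (c i) := by
        rw [hc, inner_conj_symm]
      rw [this, RCLike.mul_conj]
      norm_cast
    rw [heq] at h1
    exact h1.unique h2
  have hay : a ≤ ‖x‖ * ‖y‖ := by
    have h := norm_inner_le_norm (𝕜 := ℂ) x y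
    rw [hxy] at h
    simpa [Complex.norm_real, abs_of_nonneg ha0] using h
  have hyt : (∑' i : ↥Jᶜ, c i • f i) = y := hy.tsum_eq
  rw [hyt, ← hab]
  show (3 / 4 : ℝ) * (b + a) ≤ b + ‖y‖ ^ 2
  have ha2 : a ^ 2 ≤ (b + a) * ‖y‖ ^ 2 := by
    have : a ^ 2 ≤ (‖x‖ * ‖y‖) ^ 2 := by
      nlinarith [mul_nonneg (norm_nonneg x) (norm_nonneg y)]
    calc a ^ 2 ≤ (‖x‖ * ‖y‖) ^ 2 := this
      _ = ‖x‖ ^ 2 * ‖y‖ ^ 2 := by ring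
      _ = (b + a) * ‖y‖ ^ 2 := by rw [hab]
  rcases eq_or_lt_of_le (by linarith : (0 : ℝ) ≤ b + a) with h | h
  · have hy2 : (0 : ℝ) ≤ ‖y‖ ^ 2 := sq_nonneg _
    nlinarith
  · nlinarith [sq_nonneg (a - b), mul_pos h h]
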